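/- Let z = (F ←γ G →μ F*, θ̄) be a regular ε-quadratic split preformation over ℤ with μ injective and coker(μ) finite. Then the linking pairing λ_μ : coker(μ) × coker(μ) → ℚ/ℤ given by λ_μ([x], [y]) = (1/s)·γ*(x)(g) mod ℤ, where g ∈ G and s ∈ ℤ∖{0} satisfy s·y = μ(g), is well-defined: it is independent of the choice of representatives x, y ∈ F* and of the choice of (s, g), and it is (−ε)-symmetric: λ_μ([x],[y]) = −ε·λ_μ([y],[x]) in ℚ/ℤ. -/

import Mathlib

/-- Let `z = (F ←γ G →μ F*, θ̄)` be a regular `ε`-quadratic split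
preformation over `ℤ` with `μ` injective and `coker μ` finite.  Then the linking
pairing `λ_μ : coker μ × coker μ → ℚ/ℤ`, `λ_μ([x],[y]) = (1/s)·γ*(x)(g) mod ℤ`
(where `s·y = μ(g)`, `s ≠ 0`), is well defined — denominators `(s, g)` exist for
every `y`, the value is independent of all choices — and is `(−ε)`-symmetric.
Here `ℚ/ℤ` is `ℚ ⧸ zmultiples 1` and `γ*(x)(g) = x (γ g)`. -/
theorem stmt_18 (ε : ℤ) (hε : ε = 1 ∨ ε = -1)
    (F G : Type) [AddCommGroup F] [Module ℤ F] [Module.Free ℤ F] [Module.Finite ℤ F]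
    [AddCommGroup G] [Module ℤ G] [Module.Free ℤ G] [Module.Finite ℤ G]
    (γ : G →ₗ[ℤ] F) (μ : G →ₗ[ℤ] (F →ₗ[ℤ] ℤ))
    (hsymm : ∀ g h : G, μ g (γ h) = -ε * (μ h (γ g)))
    (hinj : Function.Injective μ)
    (hcok : Finite ((F →ₗ[ℤ] ℤ) ⧸ LinearMap.range μ)) :
    -- every element of F* has a nonzero multiple in the image of μ
    (∀ y : F →ₗ[ℤ] ℤ, ∃ s : ℤ, s ≠ 0 ∧ ∃ g : G, s • y = μ g) ∧
    -- the value (1/s)·x(γ g) mod ℤ is independent of all choices of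
    -- representatives x, y and of the pair (s, g)
    (∀ (x y x' y' : F →ₗ[ℤ] ℤ) (s s' : ℤ) (g g' : G),
      s ≠ 0 → s' ≠ 0 → s • y = μ g → s' • y' = μ g' →
      x - x' ∈ LinearMap.range μ → y - y' ∈ LinearMap.range μ →
      (QuotientAddGroup.mk (((x (γ g) : ℚ)) / (s : ℚ)) :
          ℚ ⧸ AddSubgroup.zmultiples (1 : ℚ)) =
        QuotientAddGroup.mk (((x' (γ g') : ℚ)) / (s' : ℚ))) ∧
    -- (−ε)-symmetry: λ_μ([x],[y]) = −ε · λ_μ([y],[x]) in ℚ/ℤ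
    (∀ (x y : F →ₗ[ℤ] ℤ) (s t : ℤ) (g h : G),
      s ≠ 0 → t ≠ 0 → s • y = μ g → t • x = μ h →
      (QuotientAddGroup.mk (((x (γ g) : ℚ)) / (s : ℚ)) :
          ℚ ⧸ AddSubgroup.zmultiples (1 : ℚ)) =
        (-ε : ℤ) • QuotientAddGroup.mk (((y (γ h) : ℚ)) / (t : ℚ))) := by
  refine ⟨?_, ?_, ?_⟩
  · intro y
    have hfin : IsOfFinAddOrder ((LinearMap.range μ).mkQ y) := isOfFinAddOrder_of_finite _
    obtain ⟨n, hn, hny⟩ := hfin.exists_nsmul_eq_zero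
    refine ⟨(n : ℤ), by exact_mod_cast hn.ne', ?_⟩
    have : (LinearMap.range μ).mkQ ((n : ℤ) • y) = 0 := by
      simp only [← Int.cast_smul_eq_zsmul ℤ, Int.cast_id, map_smul]
      simpa only [Int.cast_id, Nat.cast_smul_eq_nsmul ℤ] using hny
    obtain ⟨g, hg⟩ := (Submodule.Quotient.mk_eq_zero _).mp this
    exact ⟨g, hg.symm⟩
  · intro x y x' y' s s' g g' hs hs' hsg hs'g' hx hy
    simp only [← Int.cast_smul_eq_zsmul ℤ, Int.cast_id] at hsg hs'g'
    obtain ⟨k, hk⟩ := hx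
    obtain ⟨l, hl⟩ := hy
    have hgl : s' • g = s • g' + (s * s') • l := by
      apply hinj
      simp only [← Int.cast_smul_eq_zsmul ℤ, Int.cast_id, map_add, map_smul]
      rw [← hsg, ← hs'g', hl]
      module
    have h1 : s' * x (γ g) = s * x (γ g') + (s * s') * x (γ l) := by
      have := congrArg (fun z => x (γ z)) hgl
      simpa [← Int.cast_smul_eq_zsmul ℤ, Int.cast_id, map_add, map_smul, smul_eq_mul] using this
    have h2 : x' (γ g') = x (γ g') + ε * (s' * y' (γ k)) := by
      have e1 : (μ k) (γ g') = x (γ g') - x' (γ g') := by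
        rw [hk]; simp
      have e2 : (μ k) (γ g') = -ε * (s' * y' (γ k)) := by
        rw [hsymm k g', ← hs'g']
        simp [smul_eq_mul]
      linear_combination e1 - e2
    rw [QuotientAddGroup.eq]
    refine ⟨ε * y' (γ k) - x (γ l), ?_⟩
    have hq1 : (s' : ℚ) * (x (γ g) : ℚ) = s * x (γ g') + (s * s') * x (γ l) := by
      exact_mod_cast h1
    have hq2 : (x' (γ g') : ℚ) = x (γ g') + ε * (s' * y' (γ k)) := by
      exact_mod_cast h2
    have hsq : (s : ℚ) ≠ 0 := Int.cast_ne_zero.mpr hs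
    have hs'q : (s' : ℚ) ≠ 0 := Int.cast_ne_zero.mpr hs'
    simp only [zsmul_eq_mul, mul_one]
    push_cast
    field_simp
    linear_combination hq1 - (s:ℚ) * hq2
  · intro x y s t g h hs ht hsg htx
    simp only [← Int.cast_smul_eq_zsmul ℤ, Int.cast_id] at hsg htx
    have hz : t * x (γ g) = -ε * (s * y (γ h)) := by
      have e1 := congrArg (fun z => z (γ g)) htx
      simp only [LinearMap.smul_apply, smul_eq_mul, Int.cast_id] at e1
      have e3 : μ g (γ h) = s * y (γ h) := by rw [← hsg]; simp [smul_eq_mul]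
      rw [e1, hsymm h g, e3]
    have hsq : (s : ℚ) ≠ 0 := Int.cast_ne_zero.mpr hs
    have htq : (t : ℚ) ≠ 0 := Int.cast_ne_zero.mpr ht
    have hzq : (t : ℚ) * x (γ g) = -(ε:ℚ) * (s * y (γ h)) := by exact_mod_cast hz
    have hq : (x (γ g) : ℚ) / s = (-(ε:ℚ)) * ((y (γ h) : ℚ) / t) := by
      field_simp
      linear_combination hzq
    have hsm : ((-ε : ℤ) • ((y (γ h) : ℚ) / t)) = (-(ε:ℚ)) * ((y (γ h) : ℚ) / t) := by
      rw [zsmul_eq_mul]; push_cast; ring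
    rw [← QuotientAddGroup.mk_zsmul, hsm, ← hq]
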